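/- Suppose C is malnormal in A and malnormal in B (as subgroups of G = A ∗_C B). Then for every subgroup D of C and every g ∈ G ∖ C one has D ∩ g⁻¹ D g = {1}; in particular, C itself is malnormal in G. -/

import Mathlib

open Monoid

universe u

/-- The two factors of the amalgam, indexed by `Bool`. -/
def Fac (A B : Type u) : Bool → Type u
  | true => A
  | false => B

instance FacGroup (A B : Type u) [Group A] [Group B] : (b : Bool) → Group (Fac A B b)
  | true => inferInstanceAs (Group A)
  | false => inferInstanceAs (Group B)

variable {A B C : Type u} [Group A] [Group B] [Group C]

/-- The family of monomorphisms `C → A`, `C → B`. -/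
def amalgHom (φ : C →* A) (ψ : C →* B) : (b : Bool) → C →* Fac A B b
  | true => φ
  | false => ψ

variable (φ : C →* A) (ψ : C →* B)

/-- The amalgamated free product `G = A ∗_C B`, i.e. the pushout of `φ` and `ψ`. -/
abbrev Amalg : Type u := Monoid.PushoutI (amalgHom φ ψ)

/-- The factor `A`, identified with its image in `G = A ∗_C B`. -/
def facA : Subgroup (Amalg φ ψ) := (Monoid.PushoutI.of (φ := amalgHom φ ψ) true).range

/-- The factor `B`, identified with its image in `G = A ∗_C B`. -/
def facB : Subgroup (Amalg φ ψ) := (Monoid.PushoutI.of (φ := amalgHom φ ψ) false).range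

/-- The amalgamated subgroup `C`, identified with its image in `G = A ∗_C B`. -/
def amalgC : Subgroup (Amalg φ ψ) := (Monoid.PushoutI.base (amalgHom φ ψ)).range

/-- `c * g₁ ⋯ gₙ` (with the list `L = [g₁, …, gₙ]`) is a reduced form:
`c ∈ C`, each `gᵢ ∈ (A ∪ B) ∖ C`, and consecutive letters lie in different factors. -/
def ReducedForm (c : Amalg φ ψ) (L : List (Amalg φ ψ)) : Prop :=
  c ∈ amalgC φ ψ ∧
  (∀ x ∈ L, (x ∈ facA φ ψ ∨ x ∈ facB φ ψ) ∧ x ∉ amalgC φ ψ) ∧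
  L.Chain' (fun x y => (x ∈ facA φ ψ → y ∈ facB φ ψ) ∧ (x ∈ facB φ ψ → y ∈ facA φ ψ))

/-- A reduced form `c * g₁ ⋯ gₙ` is cyclically reduced if `n = 0`, or `n = 1` and the
element is not conjugate to an element of `C`, or `n ≥ 2` and `g₁`, `gₙ` lie in different
factors. -/
def CyclicallyReducedForm (c : Amalg φ ψ) (L : List (Amalg φ ψ)) : Prop :=
  ReducedForm φ ψ c L ∧
  (L.length = 0 ∨
    (L.length = 1 ∧ ∀ x : Amalg φ ψ, x⁻¹ * (c * L.prod) * x ∉ amalgC φ ψ) ∨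
    (2 ≤ L.length ∧ ∀ x y : Amalg φ ψ, x ∈ L.head? → y ∈ L.getLast? →
      ((x ∈ facA φ ψ → y ∈ facB φ ψ) ∧ (x ∈ facB φ ψ → y ∈ facA φ ψ))))

/-- An element of `G = A ∗_C B` is cyclically reduced if it has a cyclically reduced
reduced form. -/
def CyclicallyReduced (g : Amalg φ ψ) : Prop :=
  ∃ (c : Amalg φ ψ) (L : List (Amalg φ ψ)), g = c * L.prod ∧ CyclicallyReducedForm φ ψ c L

/-- `C` is malnormal in `K` (both viewed as subgroups of an ambient group):
`C ∩ x⁻¹ C x = {1}` for every `x ∈ K ∖ C`. -/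
def MalnormalIn {G : Type*} [Group G] (C K : Subgroup G) : Prop :=
  ∀ x ∈ K, x ∉ C → ∀ y ∈ C, x * y * x⁻¹ ∈ C → y = 1

namespace AmalgAux

open Monoid.PushoutI List

/-- The alternation relation on letters. -/
def Alt (x y : Amalg φ ψ) : Prop :=
  (x ∈ facA φ ψ → y ∈ facB φ ψ) ∧ (x ∈ facB φ ψ → y ∈ facA φ ψ)

/-- A good letter: lies in one of the factors but not in `C`. -/
def Good (x : Amalg φ ψ) : Prop :=
  (x ∈ facA φ ψ ∨ x ∈ facB φ ψ) ∧ x ∉ amalgC φ ψ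

lemma amalgHom_injective (hφ : Function.Injective φ) (hψ : Function.Injective ψ) :
    ∀ b, Function.Injective (amalgHom φ ψ b) := by
  intro b; cases b
  · exact hψ
  · exact hφ

lemma amalgC_le_fac (b : Bool) :
    amalgC φ ψ ≤ (Monoid.PushoutI.of (φ := amalgHom φ ψ) b).range := by
  rintro x ⟨h, rfl⟩
  exact ⟨amalgHom φ ψ b h, Monoid.PushoutI.of_apply_eq_base _ _ _⟩

lemma amalgC_le_facA : amalgC φ ψ ≤ facA φ ψ := amalgC_le_fac φ ψ true

lemma amalgC_le_facB : amalgC φ ψ ≤ facB φ ψ := amalgC_le_fac φ ψ false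

variable (hφ : Function.Injective φ) (hψ : Function.Injective ψ)
include hφ hψ

lemma mem_amalgC_of_mem_both {x : Amalg φ ψ}
    (hxA : x ∈ facA φ ψ) (hxB : x ∈ facB φ ψ) : x ∈ amalgC φ ψ := by
  have h := Monoid.PushoutI.inf_of_range_eq_base_range
    (amalgHom_injective φ ψ hφ hψ) (i := true) (j := false) (by simp)
  have : x ∈ (Monoid.PushoutI.of (φ := amalgHom φ ψ) true).range ⊓
      (Monoid.PushoutI.of (φ := amalgHom φ ψ) false).range := ⟨hxA, hxB⟩
  rw [h] at this
  exact this

lemma of_mem_amalgC {b : Bool} {a : Fac A B b}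
    (h : Monoid.PushoutI.of (φ := amalgHom φ ψ) b a ∈ amalgC φ ψ) :
    a ∈ (amalgHom φ ψ b).range := by
  obtain ⟨c, hc⟩ := h
  refine ⟨c, Monoid.PushoutI.of_injective (amalgHom_injective φ ψ hφ hψ) b ?_⟩
  rw [Monoid.PushoutI.of_apply_eq_base]
  exact hc

lemma of_not_mem_amalgC {b : Bool} {a : Fac A B b}
    (h : a ∉ (amalgHom φ ψ b).range) :
    Monoid.PushoutI.of (φ := amalgHom φ ψ) b a ∉ amalgC φ ψ :=
  fun hc => h (of_mem_amalgC φ ψ hφ hψ hc)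

lemma good_inv {x : Amalg φ ψ} (h : Good φ ψ x) : Good φ ψ x⁻¹ := by
  obtain ⟨h1, h2⟩ := h
  refine ⟨?_, fun hc => h2 (by simpa using inv_mem hc)⟩
  rcases h1 with h | h
  · exact Or.inl (inv_mem h)
  · exact Or.inr (inv_mem h)

lemma alt_inv_rev {x y : Amalg φ ψ} (hx : Good φ ψ x) (hy : Good φ ψ y)
    (h : Alt φ ψ x y) : Alt φ ψ y⁻¹ x⁻¹ := by
  constructor
  · intro hyA
    rw [inv_mem_iff] at hyA
    rw [inv_mem_iff]
    rcases hx.1 with hA | hB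
    · exact absurd (mem_amalgC_of_mem_both φ ψ hφ hψ hyA (h.1 hA)) hy.2
    · exact hB
  · intro hyB
    rw [inv_mem_iff] at hyB
    rw [inv_mem_iff]
    rcases hx.1 with hA | hB
    · exact hA
    · exact absurd (mem_amalgC_of_mem_both φ ψ hφ hψ (h.2 hB) hyB) hy.2

/-- Strengthen a `Chain'` with a predicate satisfied by all members. -/
lemma chain'_and {α : Type*} {R : α → α → Prop} {P : α → Prop} :
    ∀ {l : List α}, l.Chain' R → (∀ x ∈ l, P x) →
      l.Chain' (fun a b => R a b ∧ P a ∧ P b)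
  | [], _, _ => List.isChain_nil
  | a :: l, hc, hP => by
    rw [List.Chain', List.isChain_cons] at hc ⊢
    refine ⟨fun b hb => ⟨hc.1 b hb, hP a (List.mem_cons_self),
      hP b (List.mem_cons_of_mem _ (List.mem_of_mem_head? hb))⟩, ?_⟩
    · exact chain'_and hc.2 fun x hx => hP x (List.mem_cons_of_mem _ hx)

/-- From a good alternating list we can build a reduced `CoprodI.Word`. -/
lemma exists_word :
    ∀ (L : List (Amalg φ ψ)), (∀ x ∈ L, Good φ ψ x) → L.Chain' (Alt φ ψ) →
    ∃ w : Monoid.CoprodI.Word (Fac A B),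
      Monoid.PushoutI.Reduced (amalgHom φ ψ) w ∧
      Monoid.PushoutI.ofCoprodI w.prod = L.prod ∧
      w.toList.length = L.length ∧
      (∀ p ∈ w.toList.head?, ∀ x ∈ L.head?,
        x ∈ (Monoid.PushoutI.of (φ := amalgHom φ ψ) p.1).range) := by
  intro L
  induction L with
  | nil =>
    intro _ _
    refine ⟨Monoid.CoprodI.Word.empty, ?_, by simp, rfl, ?_⟩
    · intro g hg; simp [Monoid.CoprodI.Word.empty] at hg
    · intro p hp; simp [Monoid.CoprodI.Word.empty] at hp
  | cons x L ih =>
    intro hmem hchain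
    obtain ⟨w, hred, hprod, hlen, hhead⟩ := ih
      (fun y hy => hmem y (List.mem_cons_of_mem _ hy)) hchain.tail
    have hx : Good φ ψ x := hmem x (List.mem_cons_self)
    obtain ⟨b, a, ha⟩ : ∃ (b : Bool) (a : Fac A B b),
        Monoid.PushoutI.of (φ := amalgHom φ ψ) b a = x := by
      rcases hx.1 with ⟨a, ha⟩ | ⟨a, ha⟩
      · exact ⟨true, a, ha⟩
      · exact ⟨false, a, ha⟩
    have har : a ∉ (amalgHom φ ψ b).range := by
      rintro ⟨c, rfl⟩
      exact hx.2 (ha ▸ ⟨c, (Monoid.PushoutI.of_apply_eq_base (amalgHom φ ψ) b c).symm⟩)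
    have ha1 : a ≠ 1 := by
      rintro rfl
      apply hx.2
      rw [← ha, map_one]
      exact one_mem _
    have hne : ∀ p ∈ w.toList.head?, b ≠ p.1 := by
      intro p hp heq
      have hwnil : w.toList ≠ [] := by
        intro h; rw [h] at hp; simp at hp
      have hLnil : L ≠ [] := by
        intro h
        rw [h] at hlen
        exact hwnil (List.length_eq_zero_iff.mp hlen)
      obtain ⟨y, L', rfl⟩ := List.exists_cons_of_ne_nil hLnil
      have hyfac : y ∈ (Monoid.PushoutI.of (φ := amalgHom φ ψ) p.1).range :=
        hhead p hp y (by simp)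
      rw [← heq] at hyfac
      have hy : Good φ ψ y := hmem y (by simp)
      have halt : Alt φ ψ x y := (List.isChain_cons_cons.mp hchain).1
      cases b with
      | true =>
        have hxA : x ∈ facA φ ψ := ⟨a, ha⟩
        exact hy.2 (mem_amalgC_of_mem_both φ ψ hφ hψ hyfac (halt.1 hxA))
      | false =>
        have hxB : x ∈ facB φ ψ := ⟨a, ha⟩
        exact hy.2 (mem_amalgC_of_mem_both φ ψ hφ hψ (halt.2 hxB) hyfac)
    refine ⟨⟨⟨b, a⟩ :: w.toList, ?_, ?_⟩, ?_, ?_, ?_, ?_⟩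
    · intro l hl
      rcases List.mem_cons.mp hl with rfl | hl
      · exact ha1
      · exact w.ne_one l hl
    · exact List.isChain_cons.2 ⟨fun p hp => hne p hp, w.chain_ne⟩
    · intro g hg
      rcases List.mem_cons.mp hg with rfl | hg
      · exact har
      · exact hred g hg
    · show Monoid.PushoutI.ofCoprodI
        ((List.map (fun l => Monoid.CoprodI.of l.snd) (⟨b, a⟩ :: w.toList)).prod) = _
      rw [List.map_cons, List.prod_cons, map_mul, Monoid.PushoutI.ofCoprodI_of, ha,
        List.prod_cons]
      exact congrArg (fun t => x * t) hprod
    · simp [hlen]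
    · intro p hp y hy
      simp only [List.head?_cons, Option.mem_def, Option.some.injEq] at hp hy
      subst hp; subst hy
      exact ⟨a, ha⟩

/-- The product of a nonempty good alternating list is not in `C`. -/
lemma altprod_not_mem (L : List (Amalg φ ψ)) (hL : L ≠ [])
    (hmem : ∀ x ∈ L, Good φ ψ x) (hchain : L.Chain' (Alt φ ψ)) :
    L.prod ∉ amalgC φ ψ := by
  obtain ⟨w, hred, hprod, hlen, -⟩ := exists_word φ ψ hφ hψ L hmem hchain
  intro hC
  have : Monoid.PushoutI.ofCoprodI w.prod ∈ (Monoid.PushoutI.base (amalgHom φ ψ)).range := by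
    rw [hprod]; exact hC
  have hw := hred.eq_empty_of_mem_range (amalgHom_injective φ ψ hφ hψ) this
  apply hL
  have : w.toList = [] := by rw [hw]; rfl
  rw [this] at hlen
  exact List.length_eq_zero_iff.mp hlen.symm

lemma alt_of {b b' : Bool} {a : Fac A B b} {a' : Fac A B b'} (hbb : b ≠ b')
    (h : a ∉ (amalgHom φ ψ b).range) (h' : a' ∉ (amalgHom φ ψ b').range) :
    Alt φ ψ (Monoid.PushoutI.of (φ := amalgHom φ ψ) b a)
      (Monoid.PushoutI.of (φ := amalgHom φ ψ) b' a') := by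
  cases b <;> cases b'
  · exact absurd rfl hbb
  · constructor
    · intro hA
      exact absurd (of_mem_amalgC φ ψ hφ hψ
        (mem_amalgC_of_mem_both φ ψ hφ hψ hA ⟨a, rfl⟩)) h
    · intro _
      exact ⟨a', rfl⟩
  · constructor
    · intro _
      exact ⟨a', rfl⟩
    · intro hB
      exact absurd (of_mem_amalgC φ ψ hφ hψ
        (mem_amalgC_of_mem_both φ ψ hφ hψ ⟨a, rfl⟩ hB)) h
  · exact absurd rfl hbb

lemma chain_map :
    ∀ (M : List (Σ b, Fac A B b)),
      (∀ l ∈ M, l.2 ∉ (amalgHom φ ψ l.1).range) →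
      M.Chain' (fun l l' => l.1 ≠ l'.1) →
      (M.map fun l => Monoid.PushoutI.of (φ := amalgHom φ ψ) l.1 l.2).Chain' (Alt φ ψ)
  | [], _, _ => List.isChain_nil
  | l :: M, hmem, hchain => by
    rw [List.Chain', List.map_cons, List.isChain_cons]
    constructor
    · intro y hy
      match M, hy with
      | l' :: M', hy =>
        rw [List.map_cons, List.head?_cons, Option.mem_def, Option.some.injEq] at hy
        subst hy
        exact alt_of φ ψ hφ hψ ((List.isChain_cons_cons.mp hchain).1)
          (hmem l (List.mem_cons_self))
          (hmem l' (List.mem_cons_of_mem _ (List.mem_cons_self)))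
    · exact chain_map M (fun x hx => hmem x (List.mem_cons_of_mem _ hx)) hchain.tail

/-- Every element decomposes as `c * L.prod` with `c ∈ C` and `L` a good alternating list. -/
lemma exists_decomp (g : Amalg φ ψ) :
    ∃ (c : Amalg φ ψ) (L : List (Amalg φ ψ)), g = c * L.prod ∧ c ∈ amalgC φ ψ ∧
      (∀ x ∈ L, Good φ ψ x) ∧ L.Chain' (Alt φ ψ) := by
  classical
  obtain ⟨d⟩ := Monoid.PushoutI.NormalWord.transversal_nonempty (amalgHom φ ψ)
    (amalgHom_injective φ ψ hφ hψ)
  set w : Monoid.PushoutI.NormalWord d := g • Monoid.PushoutI.NormalWord.empty with hw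
  have hgw : g = w.prod := by
    rw [hw, Monoid.PushoutI.NormalWord.prod_smul, Monoid.PushoutI.NormalWord.prod_empty,
      mul_one]
  have hnr : ∀ l ∈ w.toList, l.2 ∉ (amalgHom φ ψ l.1).range := by
    intro l hl hrange
    have h1 : l.2 ∈ d.set l.1 := w.normalized l.1 l.2 hl
    have h2 : l.2 ≠ 1 := w.toWord.ne_one l hl
    obtain ⟨u, -, hu2⟩ := (d.compl l.1).existsUnique l.2
    have e1 := hu2 ⟨⟨l.2, hrange⟩, ⟨1, d.one_mem l.1⟩⟩ (by simp)
    have e2 := hu2 ⟨⟨1, one_mem _⟩, ⟨l.2, h1⟩⟩ (by simp)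
    apply h2
    have h3 := e1.trans e2.symm
    simpa using congrArg (fun p => (p.1 : Fac A B l.1)) h3
  refine ⟨Monoid.PushoutI.base (amalgHom φ ψ) w.head,
    w.toList.map (fun l => Monoid.PushoutI.of (φ := amalgHom φ ψ) l.1 l.2),
    ?_, ⟨w.head, rfl⟩, ?_, ?_⟩
  · rw [hgw]
    show Monoid.PushoutI.NormalWord.prod w = _
    rw [Monoid.PushoutI.NormalWord.prod]
    congr 1
    show Monoid.PushoutI.ofCoprodI
      (List.prod (w.toList.map fun l => Monoid.CoprodI.of l.snd)) = _
    rw [map_list_prod, List.map_map]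
    refine congrArg List.prod (List.map_congr_left ?_)
    intro l _
    simp [Function.comp]
  · intro x hx
    rw [List.mem_map] at hx
    obtain ⟨l, hl, rfl⟩ := hx
    obtain ⟨b, a⟩ := l
    refine ⟨?_, of_not_mem_amalgC φ ψ hφ hψ (hnr _ hl)⟩
    cases b
    · exact Or.inr ⟨a, rfl⟩
    · exact Or.inl ⟨a, rfl⟩
  · exact chain_map φ ψ hφ hψ w.toList hnr w.toWord.chain_ne

end AmalgAux

/-- If `C` is malnormal in both factors `A` and `B`, then for every subgroup `D ≤ C` and every
`g ∈ G ∖ C` one has `D ∩ g⁻¹ D g = {1}`; in particular `C` is malnormal in `G = A ∗_C B`. -/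
theorem malnormal_both_factors
    (hφ : Function.Injective φ) (hψ : Function.Injective ψ)
    (hA : MalnormalIn (amalgC φ ψ) (facA φ ψ))
    (hB : MalnormalIn (amalgC φ ψ) (facB φ ψ))
    (D : Subgroup (Amalg φ ψ)) (hD : D ≤ amalgC φ ψ)
    (g : Amalg φ ψ) (hg : g ∉ amalgC φ ψ) :
    (∀ y ∈ D, g * y * g⁻¹ ∈ D → y = 1) ∧
    (∀ y ∈ amalgC φ ψ, g * y * g⁻¹ ∈ amalgC φ ψ → y = 1) := by
  have key : ∀ y ∈ amalgC φ ψ, g * y * g⁻¹ ∈ amalgC φ ψ → y = 1 := by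
    intro y hy hconj
    obtain ⟨c, L, hgL, hc, hmem, hchain⟩ := AmalgAux.exists_decomp φ ψ hφ hψ g
    rcases List.eq_nil_or_concat L with rfl | ⟨L', an, rfl⟩
    · exact absurd (show g ∈ amalgC φ ψ by rw [hgL]; simpa using hc) hg
    rw [List.concat_eq_append] at hgL hmem hchain
    have ha : AmalgAux.Good φ ψ an := hmem an (by simp)
    set z := an * y * an⁻¹ with hz
    have hLy : L'.prod * z * L'.prod⁻¹ ∈ amalgC φ ψ := by
      have h1 : L'.prod * z * L'.prod⁻¹ = c⁻¹ * (g * y * g⁻¹) * c := by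
        rw [hz, hgL, List.prod_append, List.prod_cons, List.prod_nil, mul_one]
        group
      rw [h1]
      exact mul_mem (mul_mem (inv_mem hc) hconj) hc
    have hzfac : (an ∈ facA φ ψ → z ∈ facA φ ψ) ∧ (an ∈ facB φ ψ → z ∈ facB φ ψ) :=
      ⟨fun h => mul_mem (mul_mem h (AmalgAux.amalgC_le_facA φ ψ hy)) (inv_mem h),
       fun h => mul_mem (mul_mem h (AmalgAux.amalgC_le_facB φ ψ hy)) (inv_mem h)⟩
    by_cases hzC : z ∈ amalgC φ ψ
    · rcases ha.1 with h | h
      · exact hA an h ha.2 y hy hzC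
      · exact hB an h ha.2 y hy hzC
    exfalso
    have hchain' : List.Chain' (AmalgAux.Alt φ ψ) L' ∧
        (∀ x ∈ L'.getLast?, AmalgAux.Alt φ ψ x an) := by
      rw [List.Chain', List.isChain_append] at hchain
      exact ⟨hchain.1, fun x hx => hchain.2.2 x hx an (by simp)⟩
    have hmem_t : ∀ t ∈ L'.getLast?, t ∈ L' := by
      intro t ht
      obtain ⟨hne, heq⟩ := List.mem_getLast?_eq_getLast ht
      rw [heq]
      exact List.getLast_mem hne
    have hanA : z ∈ facA φ ψ → an ∈ facA φ ψ := by
      intro hzA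
      rcases ha.1 with h | h
      · exact h
      · exact absurd (AmalgAux.mem_amalgC_of_mem_both φ ψ hφ hψ hzA (hzfac.2 h)) hzC
    have hanB : z ∈ facB φ ψ → an ∈ facB φ ψ := by
      intro hzB
      rcases ha.1 with h | h
      · exact absurd (AmalgAux.mem_amalgC_of_mem_both φ ψ hφ hψ (hzfac.1 h) hzB) hzC
      · exact h
    set M : List (Amalg φ ψ) := L' ++ z :: (L'.reverse.map (·⁻¹)) with hM
    have hMprod : M.prod = L'.prod * z * L'.prod⁻¹ := by
      rw [hM, List.prod_append, List.prod_cons]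
      rw [List.map_reverse, ← List.prod_inv_reverse]
      group
    have hgood : ∀ x ∈ M, AmalgAux.Good φ ψ x := by
      intro x hx
      rw [hM, List.mem_append, List.mem_cons] at hx
      rcases hx with hx | rfl | hx
      · exact hmem x (List.mem_append_left _ hx)
      · refine ⟨?_, hzC⟩
        rcases ha.1 with h | h
        · exact Or.inl (hzfac.1 h)
        · exact Or.inr (hzfac.2 h)
      · rw [List.mem_map] at hx
        obtain ⟨t, ht, rfl⟩ := hx
        rw [List.mem_reverse] at ht
        exact AmalgAux.good_inv φ ψ hφ hψ
          (hmem t (List.mem_append_left _ ht))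
    have hcomb := AmalgAux.chain'_and φ ψ hφ hψ (P := AmalgAux.Good φ ψ) hchain'.1
      (fun x hx => hmem x (List.mem_append_left _ hx))
    have hrevchain : List.Chain' (AmalgAux.Alt φ ψ) (L'.reverse.map (·⁻¹)) := by
      rw [List.Chain', List.isChain_map, List.isChain_reverse]
      refine List.IsChain.imp ?_ hcomb
      intro a b h
      exact AmalgAux.alt_inv_rev φ ψ hφ hψ h.2.1 h.2.2 h.1
    have hheadcond : ∀ u ∈ (L'.reverse.map (·⁻¹)).head?, AmalgAux.Alt φ ψ z u := by
      intro u hu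
      rw [List.head?_map, List.head?_reverse] at hu
      rw [Option.mem_map] at hu
      obtain ⟨t, ht, rfl⟩ := hu
      have hgt : AmalgAux.Good φ ψ t := hmem t (List.mem_append_left _ (hmem_t t ht))
      have halt := hchain'.2 t ht
      constructor
      · intro hzA
        rw [inv_mem_iff]
        rcases hgt.1 with h | h
        · exact absurd (AmalgAux.mem_amalgC_of_mem_both φ ψ hφ hψ (hanA hzA) (halt.1 h)) ha.2
        · exact h
      · intro hzB
        rw [inv_mem_iff]
        rcases hgt.1 with h | h
        · exact h
        · exact absurd (AmalgAux.mem_amalgC_of_mem_both φ ψ hφ hψ (halt.2 h) (hanB hzB)) ha.2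
    have hjunction : ∀ x ∈ L'.getLast?, ∀ u ∈ (z :: (L'.reverse.map (·⁻¹))).head?,
        AmalgAux.Alt φ ψ x u := by
      intro x hx u hu
      rw [List.head?_cons, Option.mem_def, Option.some.injEq] at hu
      subst hu
      have halt := hchain'.2 x hx
      exact ⟨fun h => hzfac.2 (halt.1 h), fun h => hzfac.1 (halt.2 h)⟩
    have hchainM : List.Chain' (AmalgAux.Alt φ ψ) M := by
      rw [List.Chain', hM, List.isChain_append]
      exact ⟨hchain'.1, List.isChain_cons.2 ⟨hheadcond, hrevchain⟩, hjunction⟩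
    have hnot := AmalgAux.altprod_not_mem φ ψ hφ hψ M (by simp [hM]) hgood hchainM
    rw [hMprod] at hnot
    exact hnot hLy
  exact ⟨fun y hyD hconj => key y (hD hyD) (hD hconj), key⟩
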